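/- Linear independence satisfies Base-Monotonicity: if A ⫝_C B in a K-vector space V and C ⊆ C' ⊆ B, then A ⫝_{C'} B. -/

import Mathlib

/-- The linear independence relation: `A` is independent from `B` over `C` in the
`K`-vector space `V`. -/
def Indep (K : Type*) {V : Type*} [Field K] [AddCommGroup V] [Module K V]
    (A C B : Set V) : Prop :=
  Submodule.span K (A ∪ C) ⊓ Submodule.span K (B ∪ C) = Submodule.span K C

/-- Base-monotonicity of linear independence. -/
theorem indep_base_monotonicity {K V : Type*} [Field K] [AddCommGroup V] [Module K V]
    (A B C C' : Set V) (h : Indep K A C B) (hC : C ⊆ C') (hC' : C' ⊆ B) :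
    Indep K A C' B := by
  unfold Indep at *
  have hBC : Submodule.span K (B ∪ C) = Submodule.span K B := by
    rw [Set.union_eq_self_of_subset_right (hC.trans hC')]
  have hBC' : Submodule.span K (B ∪ C') = Submodule.span K B := by
    rw [Set.union_eq_self_of_subset_right hC']
  have hAC' : Submodule.span K (A ∪ C') = Submodule.span K C' ⊔ Submodule.span K (A ∪ C) := by
    rw [Submodule.span_union, Submodule.span_union,
      sup_comm (Submodule.span K A) (Submodule.span K C'),
      sup_comm (Submodule.span K A) (Submodule.span K C),
      ← sup_assoc, sup_eq_left.mpr (Submodule.span_mono hC : Submodule.span K C ≤ Submodule.span K C')]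
  have hle : Submodule.span K C' ≤ Submodule.span K B := Submodule.span_mono hC'
  rw [hBC] at h
  rw [hBC', hAC', sup_inf_assoc_of_le _ hle, h,
    sup_eq_left.mpr (Submodule.span_mono hC)]
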